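/- Let k_on, k_off : [0,∞) → ℝ be C¹, let k_c, k_f : [0,∞)×[0,∞) → ℝ be continuous and symmetric, and set T(V,x) = V·k_on(x) − k_off(x). Let T₀ > 0, V ∈ C¹([0,T₀]) with V(0) = V₀, and u ∈ C¹([0,∞)×[0,T₀]) with u(x,0) = u₀(x), such that there exists M > 0 with u(x,t) = 0 for all x ≥ M and all t ∈ [0,T₀]. Assume that for all t ∈ (0,T₀): V'(t) = −∫_0^∞ T(V(t),x) u(x,t) dx, and for all x > 0, ∂_t u(x,t) = −∂_x( T(V(t),x) u(x,t) ) + Q_c(u(·,t))(x) − Q_f(u(·,t))(x). Then for every t ∈ [0,T₀], V(t) = V₀ + ∫_0^∞ x (u₀(x) − u(x,t)) dx; i.e. the ODE for the monomer concentration can be replaced by the mass conservation formula. -/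

import Mathlib

open MeasureTheory

/-- The coagulation operator:
`Q_c(u)(x) = (1/2)∫_0^x k_c(y, x−y) u(y) u(x−y) dy − u(x) ∫_0^∞ k_c(x,y) u(y) dy`. -/
noncomputable def Qc (kc : ℝ → ℝ → ℝ) (u : ℝ → ℝ) (x : ℝ) : ℝ :=
  (1 / 2) * (∫ y in (0:ℝ)..x, kc y (x - y) * u y * u (x - y))
    - u x * ∫ y in Set.Ioi (0:ℝ), kc x y * u y

/-- The fragmentation operator:
`Q_f(u)(x) = (1/2) u(x) ∫_0^x k_f(y, x−y) dy − ∫_0^∞ k_f(x,y) u(x+y) dy`. -/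
noncomputable def Qf (kf : ℝ → ℝ → ℝ) (u : ℝ → ℝ) (x : ℝ) : ℝ :=
  (1 / 2) * u x * (∫ y in (0:ℝ)..x, kf y (x - y))
    - ∫ y in Set.Ioi (0:ℝ), kf x y * u (x + y)

/-- The polymerization transport rate `T(V,x) = V·k_on(x) − k_off(x)`. -/
noncomputable def Trate (kon koff : ℝ → ℝ) (V x : ℝ) : ℝ := V * kon x - koff x

open MeasureTheory Set Topology Filter


/-- 1D: continuous on `[0,∞)` and vanishing beyond `M` implies integrable on `(0,∞)`. -/
lemma aux_integrableOn_Ioi {f : ℝ → ℝ} {M : ℝ}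
    (hc : ContinuousOn f (Set.Ici 0)) (h0 : ∀ x ≥ M, f x = 0) :
    IntegrableOn f (Set.Ioi 0) volume := by
  set L := max M 1 with hLdef
  have hL : (0:ℝ) < L := lt_of_lt_of_le one_pos (le_max_right _ _)
  have h0' : ∀ x ≥ L, f x = 0 := fun x hx => h0 x ((le_max_left _ _).trans hx)
  have hset : Set.Ioi (0:ℝ) = Set.Ioc 0 L ∪ Set.Ioi L := (Set.Ioc_union_Ioi_eq_Ioi hL.le).symm
  rw [hset]
  apply IntegrableOn.union
  · have h1 : IntegrableOn f (Set.Icc 0 L) volume :=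
      (hc.mono (fun x hx => hx.1)).integrableOn_Icc
    exact h1.mono_set Set.Ioc_subset_Icc_self
  · exact (integrableOn_zero).congr_fun
      (fun x hx => (h0' x (le_of_lt hx)).symm) measurableSet_Ioi

lemma aux_setIntegral_Ioi_eq_Ioc {f : ℝ → ℝ} {L : ℝ}
    (h0 : ∀ x > L, f x = 0) :
    ∫ x in Set.Ioi (0:ℝ), f x = ∫ x in Set.Ioc 0 L, f x := by
  apply setIntegral_eq_of_subset_of_forall_diff_eq_zero measurableSet_Ioi
    Set.Ioc_subset_Ioi_self
  intro x hx
  rcases hx with ⟨hx1, hx2⟩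
  apply h0
  by_contra h
  push_neg at h
  exact hx2 ⟨hx1, h⟩

/-- 2D: integrability over `(0,∞)²` from continuity on `[0,∞)²` and compact support. -/
lemma aux_integrable_prod {F : ℝ × ℝ → ℝ} {M : ℝ}
    (hc : ContinuousOn F (Set.Ici 0 ×ˢ Set.Ici 0))
    (h0 : ∀ p : ℝ × ℝ, 0 ≤ p.1 → 0 ≤ p.2 → (M ≤ p.1 ∨ M ≤ p.2) → F p = 0) :
    Integrable F ((volume.restrict (Set.Ioi 0)).prod (volume.restrict (Set.Ioi 0))) := by
  rw [Measure.prod_restrict]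
  set s : Set (ℝ × ℝ) := Set.Ioi 0 ×ˢ Set.Ioi 0 with hs
  set K : Set (ℝ × ℝ) := Set.Icc 0 M ×ˢ Set.Icc 0 M with hK
  have hsm : MeasurableSet s := (measurableSet_Ioi.prod measurableSet_Ioi)
  have hKm : MeasurableSet K := (measurableSet_Icc.prod measurableSet_Icc)
  have hsub : s ⊆ Set.Ici 0 ×ˢ Set.Ici 0 := by
    intro p hp; exact ⟨Set.mem_Ici.2 (le_of_lt hp.1), Set.mem_Ici.2 (le_of_lt hp.2)⟩
  have hsplit : s = (s ∩ K) ∪ (s \ K) := (Set.inter_union_diff s K).symm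
  rw [hsplit]
  apply IntegrableOn.union
  · -- bounded on compact set
    have hKc : IsCompact K := isCompact_Icc.prod isCompact_Icc
    have hKsub : K ⊆ Set.Ici 0 ×ˢ Set.Ici 0 := by
      intro p hp; exact ⟨hp.1.1, hp.2.1⟩
    obtain ⟨C, hC⟩ := hKc.exists_bound_of_continuousOn (hc.mono hKsub)
    refine ⟨(hc.mono (Set.Subset.trans Set.inter_subset_left hsub)).aestronglyMeasurable
        (hsm.inter hKm), HasFiniteIntegral.restrict_of_bounded (C := C) ?_ ?_⟩
    · have : (volume.prod volume) (s ∩ K) ≤ (volume.prod volume) K :=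
        measure_mono Set.inter_subset_right
      refine lt_of_le_of_lt this ?_
      rw [hK, Measure.prod_prod]
      exact ENNReal.mul_lt_top (by simp) (by simp)
    · filter_upwards [ae_restrict_mem (hsm.inter hKm)] with p hp
      exact hC p hp.2
  · apply (integrableOn_zero).congr_fun _ (hsm.diff hKm)
    intro p hp
    rcases hp with ⟨hps, hpK⟩
    symm
    apply h0 p (le_of_lt hps.1) (le_of_lt hps.2)
    by_contra h
    push_neg at h
    exact hpK ⟨⟨le_of_lt hps.1, le_of_lt h.1⟩, ⟨le_of_lt hps.2, le_of_lt h.2⟩⟩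


/-- The shear `(y,z) ↦ (y+z, y)` as a measurable equivalence. -/
noncomputable def shearEquiv : ℝ × ℝ ≃ᵐ ℝ × ℝ where
  toFun p := (p.1 + p.2, p.1)
  invFun q := (q.2, q.1 - q.2)
  left_inv p := by simp
  right_inv q := by simp
  measurable_toFun := (measurable_fst.add measurable_snd).prodMk measurable_fst
  measurable_invFun := measurable_snd.prodMk (measurable_fst.sub measurable_snd)

lemma shear_mp :
    MeasurePreserving (fun p : ℝ × ℝ => (p.1 + p.2, p.1))
      ((volume : Measure ℝ).prod volume) ((volume : Measure ℝ).prod volume) := by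
  have h0 : MeasurePreserving (fun p : ℝ × ℝ => (p.1, p.1 + p.2))
      ((volume : Measure ℝ).prod volume) ((volume : Measure ℝ).prod volume) := by
    apply MeasurePreserving.skew_product (MeasurePreserving.id _)
      (measurable_fst.add measurable_snd)
    exact Filter.Eventually.of_forall (fun a => map_add_left_eq_self volume a)
  exact Measure.measurePreserving_swap.comp h0

/-- Triangular change of variables:
`∫_{x>0} ∫_0^x F y (x-y) dy dx = ∬_{(0,∞)²} F`. -/
lemma aux_triangle {F : ℝ → ℝ → ℝ}
    (hFi : Integrable (fun p : ℝ × ℝ => F p.1 p.2)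
      ((volume.restrict (Set.Ioi 0)).prod (volume.restrict (Set.Ioi 0)))) :
    Integrable (fun x => ∫ y in (0:ℝ)..x, F y (x - y)) (volume.restrict (Set.Ioi 0)) ∧
    ∫ x in Set.Ioi (0:ℝ), (∫ y in (0:ℝ)..x, F y (x - y))
      = ∫ p : ℝ × ℝ, F p.1 p.2
          ∂((volume.restrict (Set.Ioi 0)).prod (volume.restrict (Set.Ioi 0))) := by
  set μ : Measure ℝ := volume.restrict (Set.Ioi 0) with hμ
  set H : ℝ → ℝ → ℝ := fun x y => if y ≤ x then F y (x - y) else 0 with hH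
  have hsm : MeasurableSet (Set.Ioi (0:ℝ) ×ˢ Set.Ioi (0:ℝ)) :=
    measurableSet_Ioi.prod measurableSet_Ioi
  -- integrability of uncurry H
  have hHint : Integrable (Function.uncurry H) (μ.prod μ) := by
    rw [hμ, Measure.prod_restrict]
    apply (integrable_indicator_iff hsm).1
    have hcomp : (((Set.Ioi (0:ℝ) ×ˢ Set.Ioi (0:ℝ)).indicator (Function.uncurry H)) ∘
        (fun p : ℝ × ℝ => (p.1 + p.2, p.1)))
        =ᵐ[(volume : Measure ℝ).prod volume]
        ((Set.Ioi (0:ℝ) ×ˢ Set.Ioi (0:ℝ)).indicator (fun p : ℝ × ℝ => F p.1 p.2)) := by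
      have hnull : ((volume : Measure ℝ).prod volume) {p : ℝ × ℝ | p.2 = 0} = 0 := by
        have : {p : ℝ × ℝ | p.2 = 0} = (Set.univ : Set ℝ) ×ˢ ({0} : Set ℝ) := by
          ext p
          simp only [Set.mem_setOf_eq, Set.mem_prod, Set.mem_univ, Set.mem_singleton_iff,
            true_and]
        rw [this, Measure.prod_prod]
        simp
      have hae : ∀ᵐ p : ℝ × ℝ ∂((volume : Measure ℝ).prod volume), p.2 ≠ 0 := by
        rw [MeasureTheory.ae_iff]
        convert hnull using 2
        ext p; simp
      filter_upwards [hae] with p hp2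
      simp only [Function.comp_apply, Set.indicator_apply, Set.mem_prod, Set.mem_Ioi,
        Function.uncurry_apply_pair, hH]
      by_cases h1 : 0 < p.1
      · by_cases h2 : 0 < p.2
        · have hc1 : 0 < p.1 + p.2 := by linarith
          have hc2 : p.1 ≤ p.1 + p.2 := by linarith
          simp [h1, h2, hc1, hc2, add_sub_cancel_left]
        · have h2' : p.2 < 0 := lt_of_le_of_ne (not_lt.1 h2) hp2
          have : ¬ (p.1 ≤ p.1 + p.2) := by linarith
          simp [h1, h2, this]
      · simp [h1]
    rw [← (shear_mp.integrable_comp_emb shearEquiv.measurableEmbedding)]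
    apply (Integrable.congr _ hcomp.symm)
    rw [integrable_indicator_iff hsm]
    show Integrable (fun p : ℝ × ℝ => F p.1 p.2)
      ((volume.prod volume).restrict (Set.Ioi 0 ×ˢ Set.Ioi 0))
    rw [← Measure.prod_restrict]
    exact hFi
  have inner_eq : ∀ x ∈ Set.Ioi (0:ℝ), (∫ y, H x y ∂μ) = ∫ y in (0:ℝ)..x, F y (x - y) := by
    intro x hx
    rw [intervalIntegral.integral_of_le (le_of_lt hx)]
    have h1 : ∀ y, H x y = (Set.Iic x).indicator (fun y => F y (x - y)) y := by
      intro y; by_cases h : y ≤ x <;> simp [hH, Set.indicator_apply, h]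
    calc ∫ y, H x y ∂μ
        = ∫ y in Set.Ioi (0:ℝ), (Set.Iic x).indicator (fun y => F y (x - y)) y := by
          rw [hμ]; exact setIntegral_congr_fun measurableSet_Ioi (fun y _ => h1 y)
      _ = ∫ y in Set.Ioi (0:ℝ) ∩ Set.Iic x, F y (x - y) := setIntegral_indicator measurableSet_Iic
      _ = ∫ y in Set.Ioc (0:ℝ) x, F y (x - y) := by rw [Set.Ioi_inter_Iic]
  have inner2 : ∀ y ∈ Set.Ioi (0:ℝ), (∫ x, H x y ∂μ) = ∫ z, F y z ∂μ := by
    intro y hy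
    have h1 : ∀ x, H x y = (Set.Ici y).indicator (fun x => F y (x - y)) x := by
      intro x; by_cases h : y ≤ x <;> simp [hH, Set.indicator_apply, h]
    calc (∫ x, H x y ∂μ)
        = ∫ x in Set.Ioi (0:ℝ), (Set.Ici y).indicator (fun x => F y (x - y)) x := by
          rw [hμ]; exact setIntegral_congr_fun measurableSet_Ioi (fun x _ => h1 x)
      _ = ∫ x in Set.Ioi (0:ℝ) ∩ Set.Ici y, F y (x - y) := setIntegral_indicator measurableSet_Ici
      _ = ∫ x in Set.Ici y, F y (x - y) := by
          have hset : Set.Ioi (0:ℝ) ∩ Set.Ici y = Set.Ici y :=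
            Set.inter_eq_right.2 (fun x hx => Set.mem_Ioi.2 (lt_of_lt_of_le hy hx))
          rw [hset]
      _ = ∫ x in Set.Ioi y, F y (x - y) := integral_Ici_eq_integral_Ioi
      _ = ∫ z, F y z ∂μ := by
          have hemb : MeasurableEmbedding (fun z : ℝ => z + y) :=
            (MeasurableEquiv.addRight y).measurableEmbedding
          have hmp := measurePreserving_add_right (volume : Measure ℝ) y
          have h2 := hmp.setIntegral_preimage_emb hemb (fun x => F y (x - y)) (Set.Ioi y)
          have hpre : (fun z : ℝ => z + y) ⁻¹' (Set.Ioi y) = Set.Ioi 0 := by ext z; simp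
          rw [hpre] at h2
          rw [hμ, ← h2]
          exact setIntegral_congr_fun measurableSet_Ioi (fun z _ => by simp)
  constructor
  · have h1 : Integrable (fun x => ∫ y, H x y ∂μ) μ := by
      have h2 := hHint.integral_prod_left
      exact h2
    apply h1.congr
    refine Filter.eventuallyEq_of_mem (self_mem_ae_restrict measurableSet_Ioi) ?_
    intro x hx
    simpa using inner_eq x hx
  · have hswap := integral_integral_swap hHint
    calc ∫ x in Set.Ioi (0:ℝ), (∫ y in (0:ℝ)..x, F y (x - y))
        = ∫ x, (∫ y, H x y ∂μ) ∂μ :=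
          (setIntegral_congr_fun measurableSet_Ioi (fun x hx => (inner_eq x hx))).symm
      _ = ∫ y, (∫ x, H x y ∂μ) ∂μ := hswap
      _ = ∫ y, (∫ z, F y z ∂μ) ∂μ :=
          setIntegral_congr_fun measurableSet_Ioi (fun y hy => inner2 y hy)
      _ = ∫ p : ℝ × ℝ, F p.1 p.2 ∂(μ.prod μ) := integral_integral hFi

/-- Master symmetry lemma: for a symmetric, compactly-supported kernel `P` on `(0,∞)²`,
the "gain" triangular integral equals twice the "loss" integral. -/
lemma aux_key {P : ℝ × ℝ → ℝ} {M : ℝ}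
    (hc : ContinuousOn P (Set.Ici 0 ×ˢ Set.Ici 0))
    (hsym : ∀ p : ℝ × ℝ, 0 < p.1 → 0 < p.2 → P (p.2, p.1) = P p)
    (h0 : ∀ p : ℝ × ℝ, 0 ≤ p.1 → 0 ≤ p.2 → (M ≤ p.1 ∨ M ≤ p.2) → P p = 0) :
    Integrable (fun x => ∫ y in (0:ℝ)..x, x * P (y, x - y)) (volume.restrict (Set.Ioi 0)) ∧
    Integrable (fun x => ∫ y in Set.Ioi (0:ℝ), x * P (x, y)) (volume.restrict (Set.Ioi 0)) ∧
    ∫ x in Set.Ioi (0:ℝ), (∫ y in (0:ℝ)..x, x * P (y, x - y))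
      = 2 * ∫ x in Set.Ioi (0:ℝ), (∫ y in Set.Ioi (0:ℝ), x * P (x, y)) := by
  set μ : Measure ℝ := volume.restrict (Set.Ioi 0) with hμ
  have hsm : MeasurableSet (Set.Ioi (0:ℝ) ×ˢ Set.Ioi (0:ℝ)) :=
    measurableSet_Ioi.prod measurableSet_Ioi
  -- the three product-integrable functions
  have hcont1 : ContinuousOn (fun p : ℝ × ℝ => p.1 * P p) (Set.Ici 0 ×ˢ Set.Ici 0) :=
    (continuous_fst.continuousOn).mul hc
  have hcont2 : ContinuousOn (fun p : ℝ × ℝ => p.2 * P p) (Set.Ici 0 ×ˢ Set.Ici 0) :=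
    (continuous_snd.continuousOn).mul hc
  have hQ1 : Integrable (fun p : ℝ × ℝ => p.1 * P p) (μ.prod μ) :=
    aux_integrable_prod hcont1 (fun p h1 h2 h3 => by rw [h0 p h1 h2 h3, mul_zero])
  have hQ2 : Integrable (fun p : ℝ × ℝ => p.2 * P p) (μ.prod μ) :=
    aux_integrable_prod hcont2 (fun p h1 h2 h3 => by rw [h0 p h1 h2 h3, mul_zero])
  have hF : Integrable (fun p : ℝ × ℝ => (p.1 + p.2) * P p) (μ.prod μ) := by
    have := hQ1.add hQ2
    apply this.congr
    apply Filter.Eventually.of_forall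
    intro p; simp only [Pi.add_apply]; ring
  -- symmetry: ∫ p.2 * P p = ∫ p.1 * P p
  have hswap_eq : ∫ p : ℝ × ℝ, p.2 * P p ∂(μ.prod μ) = ∫ p : ℝ × ℝ, p.1 * P p ∂(μ.prod μ) := by
    have h1 : ∫ p : ℝ × ℝ, (fun q : ℝ × ℝ => q.1 * P q) p.swap ∂(μ.prod μ)
        = ∫ p : ℝ × ℝ, p.1 * P p ∂(μ.prod μ) :=
      integral_prod_swap (μ := volume.restrict (Set.Ioi 0)) (ν := volume.restrict (Set.Ioi 0))
        (fun q : ℝ × ℝ => q.1 * P q)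
    rw [← h1]
    apply integral_congr_ae
    have hmem : ∀ᵐ p : ℝ × ℝ ∂(μ.prod μ), p ∈ Set.Ioi (0:ℝ) ×ˢ Set.Ioi (0:ℝ) := by
      rw [hμ, Measure.prod_restrict]
      exact ae_restrict_mem hsm
    filter_upwards [hmem] with p hp
    have := hsym p hp.1 hp.2
    simp only [Prod.swap]
    rw [this]
  -- the triangle lemma applied to F y z = (y+z) * P (y,z)
  have htri := aux_triangle (F := fun y z => (y + z) * P (y, z))
    (by simpa using hF)
  -- rewrite triangle integrand
  have hinteq : ∀ x : ℝ, (∫ y in (0:ℝ)..x, (y + (x - y)) * P (y, x - y))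
      = ∫ y in (0:ℝ)..x, x * P (y, x - y) := by
    intro x
    apply intervalIntegral.integral_congr
    intro y _
    have hxy : y + (x - y) = x := by ring
    show (y + (x - y)) * P (y, x - y) = x * P (y, x - y)
    rw [hxy]
  refine ⟨?_, ?_, ?_⟩
  · apply htri.1.congr
    apply Filter.Eventually.of_forall
    intro x
    simpa using hinteq x
  · have := hQ1.integral_prod_left
    simpa using this
  · have hloss : ∫ x in Set.Ioi (0:ℝ), (∫ y in Set.Ioi (0:ℝ), x * P (x, y))
        = ∫ p : ℝ × ℝ, p.1 * P p ∂(μ.prod μ) := by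
      exact integral_integral hQ1
    calc ∫ x in Set.Ioi (0:ℝ), (∫ y in (0:ℝ)..x, x * P (y, x - y))
        = ∫ x in Set.Ioi (0:ℝ), (∫ y in (0:ℝ)..x, (y + (x - y)) * P (y, x - y)) := by
          apply setIntegral_congr_fun measurableSet_Ioi
          intro x _
          exact (hinteq x).symm
      _ = ∫ p : ℝ × ℝ, (p.1 + p.2) * P p ∂(μ.prod μ) := by
          have h2 := htri.2
          simpa using h2
      _ = (∫ p : ℝ × ℝ, p.1 * P p ∂(μ.prod μ)) + ∫ p : ℝ × ℝ, p.2 * P p ∂(μ.prod μ) := by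
          rw [← integral_add hQ1 hQ2]
          apply integral_congr_ae
          apply Filter.Eventually.of_forall
          intro p; ring
      _ = 2 * ∫ p : ℝ × ℝ, p.1 * P p ∂(μ.prod μ) := by rw [hswap_eq]; ring
      _ = 2 * ∫ x in Set.Ioi (0:ℝ), (∫ y in Set.Ioi (0:ℝ), x * P (x, y)) := by rw [hloss]


/-- At a fixed time, the integral of `x` against the right-hand side of the PDE
equals the transport integral: coagulation and fragmentation conserve mass, and the
transport term integrates by parts. -/
lemma aux_weak (kon koff : ℝ → ℝ) (kc kf : ℝ → ℝ → ℝ) (W M : ℝ) (hM : 0 < M)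
    (hkon : ContDiffOn ℝ 1 kon (Set.Ici 0))
    (hkoff : ContDiffOn ℝ 1 koff (Set.Ici 0))
    (hkc_cont : ContinuousOn (fun p : ℝ × ℝ => kc p.1 p.2) (Set.Ici 0 ×ˢ Set.Ici 0))
    (hkc_symm : ∀ x ∈ Set.Ici (0:ℝ), ∀ y ∈ Set.Ici (0:ℝ), kc x y = kc y x)
    (hkf_cont : ContinuousOn (fun p : ℝ × ℝ => kf p.1 p.2) (Set.Ici 0 ×ˢ Set.Ici 0))
    (hkf_symm : ∀ x ∈ Set.Ici (0:ℝ), ∀ y ∈ Set.Ici (0:ℝ), kf x y = kf y x)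
    (v : ℝ → ℝ) (hv : ContDiffOn ℝ 1 v (Set.Ici 0)) (hv0 : ∀ x ≥ M, v x = 0) :
    ∫ x in Set.Ioi (0:ℝ),
        x * (-(deriv (fun y => Trate kon koff W y * v y) x) + Qc kc v x - Qf kf v x)
      = ∫ x in Set.Ioi (0:ℝ), Trate kon koff W x * v x := by
  have hv_cont : ContinuousOn v (Set.Ici 0) := hv.continuousOn
  -- the two kernels as functions on the quadrant
  set P₁ : ℝ × ℝ → ℝ := fun p => kc p.1 p.2 * v p.1 * v p.2 with hP₁
  set P₂ : ℝ × ℝ → ℝ := fun p => kf p.1 p.2 * v (p.1 + p.2) with hP₂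
  have hmapsfst : Set.MapsTo (fun p : ℝ × ℝ => p.1) (Set.Ici 0 ×ˢ Set.Ici 0) (Set.Ici 0) :=
    fun p hp => hp.1
  have hmapssnd : Set.MapsTo (fun p : ℝ × ℝ => p.2) (Set.Ici 0 ×ˢ Set.Ici 0) (Set.Ici 0) :=
    fun p hp => hp.2
  have hmapsadd : Set.MapsTo (fun p : ℝ × ℝ => p.1 + p.2) (Set.Ici 0 ×ˢ Set.Ici 0)
      (Set.Ici 0) := fun p hp => Set.mem_Ici.2 (add_nonneg hp.1 hp.2)
  have hP₁cont : ContinuousOn P₁ (Set.Ici 0 ×ˢ Set.Ici 0) :=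
    (hkc_cont.mul ((hv_cont.comp continuous_fst.continuousOn hmapsfst))).mul
      (hv_cont.comp continuous_snd.continuousOn hmapssnd)
  have hP₂cont : ContinuousOn P₂ (Set.Ici 0 ×ˢ Set.Ici 0) :=
    hkf_cont.mul (hv_cont.comp (continuous_fst.add continuous_snd).continuousOn hmapsadd)
  have hP₁symm : ∀ p : ℝ × ℝ, 0 < p.1 → 0 < p.2 → P₁ (p.2, p.1) = P₁ p := by
    intro p h1 h2
    simp only [hP₁]
    rw [hkc_symm p.2 (le_of_lt h2) p.1 (le_of_lt h1)]
    ring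
  have hP₂symm : ∀ p : ℝ × ℝ, 0 < p.1 → 0 < p.2 → P₂ (p.2, p.1) = P₂ p := by
    intro p h1 h2
    simp only [hP₂]
    rw [hkf_symm p.2 (le_of_lt h2) p.1 (le_of_lt h1), add_comm]
  have hP₁0 : ∀ p : ℝ × ℝ, 0 ≤ p.1 → 0 ≤ p.2 → (M ≤ p.1 ∨ M ≤ p.2) → P₁ p = 0 := by
    intro p h1 h2 h3
    simp only [hP₁]
    rcases h3 with h3 | h3
    · rw [hv0 p.1 h3]; ring
    · rw [hv0 p.2 h3]; ring
  have hP₂0 : ∀ p : ℝ × ℝ, 0 ≤ p.1 → 0 ≤ p.2 → (M ≤ p.1 ∨ M ≤ p.2) → P₂ p = 0 := by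
    intro p h1 h2 h3
    simp only [hP₂]
    have h4 : M ≤ p.1 + p.2 := by rcases h3 with h3 | h3 <;> linarith
    rw [hv0 _ h4]; ring
  obtain ⟨hIntA₁, hIntB₁, hkey₁⟩ := aux_key hP₁cont hP₁symm hP₁0
  obtain ⟨hIntA₂, hIntB₂, hkey₂⟩ := aux_key hP₂cont hP₂symm hP₂0
  -- the transport term
  set f : ℝ → ℝ := fun y => Trate kon koff W y * v y with hf
  have hf_cd : ContDiffOn ℝ 1 f (Set.Ici 0) := by
    apply ContDiffOn.mul _ hv
    exact (contDiffOn_const.mul hkon).sub hkoff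
  have hf_cont : ContinuousOn f (Set.Ici 0) := hf_cd.continuousOn
  have hf0 : ∀ x ≥ M, f x = 0 := by
    intro x hx; simp only [hf]; rw [hv0 x hx]; ring
  have hf_diffat : ∀ x : ℝ, 0 < x → DifferentiableAt ℝ f x := by
    intro x hx
    have hnh : Set.Ici (0:ℝ) ∈ 𝓝 x := Filter.mem_of_superset (Ioi_mem_nhds hx)
      Set.Ioi_subset_Ici_self
    exact ((hf_cd.contDiffAt hnh).differentiableAt one_ne_zero)
  have hderiv_eq : ∀ x : ℝ, 0 < x → derivWithin f (Set.Ici 0) x = deriv f x := by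
    intro x hx
    apply derivWithin_of_mem_nhds
    exact Filter.mem_of_superset (Ioi_mem_nhds hx) Set.Ioi_subset_Ici_self
  have hdw_cont : ContinuousOn (derivWithin f (Set.Ici 0)) (Set.Ici 0) :=
    hf_cd.continuousOn_derivWithin (uniqueDiffOn_Ici 0) le_rfl
  have hderiv0 : ∀ x : ℝ, M < x → deriv f x = 0 := by
    intro x hx
    have hev : f =ᶠ[𝓝 x] (fun _ => (0:ℝ)) := by
      filter_upwards [Ioi_mem_nhds hx] with y hy
      exact hf0 y (le_of_lt hy)
    rw [hev.deriv_eq]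
    exact deriv_const x 0
  set L : ℝ := M + 1 with hL
  have hML : M < L := by rw [hL]; linarith
  have hL0 : (0:ℝ) < L := lt_trans hM hML
  -- integrability of x * deriv f x
  have hInt_h : IntegrableOn (fun x => x * deriv f x) (Set.Ioi 0) volume := by
    have hbase : IntegrableOn (fun x => x * derivWithin f (Set.Ici 0) x) (Set.Ioi 0)
        volume := by
      apply aux_integrableOn_Ioi (M := L) (continuous_id.continuousOn.mul hdw_cont)
      intro x hx
      have hx0 : 0 < x := lt_of_lt_of_le hL0 hx
      show x * derivWithin f (Set.Ici 0) x = 0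
      rw [hderiv_eq x hx0, hderiv0 x (lt_of_lt_of_le hML hx), mul_zero]
    apply hbase.congr_fun _ measurableSet_Ioi
    intro x hx
    simp only
    rw [hderiv_eq x hx]
  -- integration by parts
  have hparts : ∫ x in Set.Ioi (0:ℝ), x * deriv f x = - ∫ x in Set.Ioi (0:ℝ), f x := by
    have h1 : ∫ x in Set.Ioi (0:ℝ), x * deriv f x = ∫ x in (0:ℝ)..L, x * deriv f x := by
      rw [aux_setIntegral_Ioi_eq_Ioc (L := L) (fun x hx =>
        by rw [hderiv0 x (lt_trans hML hx), mul_zero])]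
      rw [intervalIntegral.integral_of_le (le_of_lt hL0)]
    have h2 : ∫ x in Set.Ioi (0:ℝ), f x = ∫ x in (0:ℝ)..L, f x := by
      rw [aux_setIntegral_Ioi_eq_Ioc (L := L) (fun x hx => hf0 x (le_of_lt (lt_trans hML hx)))]
      rw [intervalIntegral.integral_of_le (le_of_lt hL0)]
    have hfI : IntervalIntegrable f volume 0 L := by
      apply ContinuousOn.intervalIntegrable
      apply hf_cont.mono
      rw [Set.uIcc_of_le (le_of_lt hL0)]
      exact fun x hx => hx.1
    have hxdI : IntervalIntegrable (fun x => x * deriv f x) volume 0 L := by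
      rw [intervalIntegrable_iff_integrableOn_Ioc_of_le (le_of_lt hL0)]
      exact hInt_h.mono_set (fun x hx => hx.1)
    have hsumI : IntervalIntegrable (fun x => f x + x * deriv f x) volume 0 L :=
      hfI.add hxdI
    have hFTC : ∫ x in (0:ℝ)..L, (f x + x * deriv f x) = L * f L - 0 * f 0 := by
      have hcg : ContinuousOn (fun y : ℝ => y * f y) (Set.Icc 0 L) :=
        continuous_id.continuousOn.mul (hf_cont.mono (fun x hx => hx.1))
      have hdg : ∀ x ∈ Set.Ioo (0:ℝ) L, HasDerivWithinAt (fun y : ℝ => y * f y)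
          (f x + x * deriv f x) (Set.Ioi x) x := by
        intro x hx
        have hd : HasDerivAt (fun y => y * f y) (f x + x * deriv f x) x := by
          have h3 := (hasDerivAt_id x).mul ((hf_diffat x hx.1).hasDerivAt)
          simp only [id_eq, one_mul] at h3
          exact h3
        exact hd.hasDerivWithinAt
      have h6 := intervalIntegral.integral_eq_sub_of_hasDeriv_right_of_le (le_of_lt hL0)
        hcg hdg hsumI
      simpa using h6
    have hsplit : ∫ x in (0:ℝ)..L, (f x + x * deriv f x)
        = (∫ x in (0:ℝ)..L, f x) + ∫ x in (0:ℝ)..L, x * deriv f x :=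
      intervalIntegral.integral_add hfI hxdI
    have hfL : f L = 0 := hf0 L (le_of_lt hML)
    rw [h1, h2]
    rw [hsplit, hfL] at hFTC
    linarith [hFTC]
  -- pointwise identity on (0,∞)
  have hpt : ∀ x ∈ Set.Ioi (0:ℝ),
      x * (-(deriv f x) + Qc kc v x - Qf kf v x)
        = -(x * deriv f x)
          + ((1/2) * (∫ y in (0:ℝ)..x, x * P₁ (y, x - y))
              - ∫ y in Set.Ioi (0:ℝ), x * P₁ (x, y))
          - ((1/2) * (∫ y in (0:ℝ)..x, x * P₂ (y, x - y))
              - ∫ y in Set.Ioi (0:ℝ), x * P₂ (x, y)) := by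
    intro x _
    have e1 : (∫ y in (0:ℝ)..x, x * P₁ (y, x - y))
        = x * ∫ y in (0:ℝ)..x, kc y (x - y) * v y * v (x - y) :=
      intervalIntegral.integral_const_mul _ _
    have e2 : (∫ y in Set.Ioi (0:ℝ), x * P₁ (x, y))
        = x * (v x * ∫ y in Set.Ioi (0:ℝ), kc x y * v y) := by
      have h5 : x * (v x * ∫ y in Set.Ioi (0:ℝ), kc x y * v y)
          = ∫ y in Set.Ioi (0:ℝ), (x * v x) * (kc x y * v y) := by
        rw [integral_const_mul]; ring
      rw [h5]
      apply setIntegral_congr_fun measurableSet_Ioi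
      intro y _
      simp only [hP₁]
      ring
    have e3 : (∫ y in (0:ℝ)..x, x * P₂ (y, x - y))
        = x * (v x * ∫ y in (0:ℝ)..x, kf y (x - y)) := by
      calc (∫ y in (0:ℝ)..x, x * P₂ (y, x - y))
          = ∫ y in (0:ℝ)..x, (x * v x) * kf y (x - y) := by
            apply intervalIntegral.integral_congr
            intro y _
            show x * P₂ (y, x - y) = (x * v x) * kf y (x - y)
            simp only [hP₂]
            have hxy : y + (x - y) = x := by ring
            rw [hxy]; ring
        _ = (x * v x) * ∫ y in (0:ℝ)..x, kf y (x - y) :=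
            intervalIntegral.integral_const_mul _ _
        _ = x * (v x * ∫ y in (0:ℝ)..x, kf y (x - y)) := by ring
    have e4 : (∫ y in Set.Ioi (0:ℝ), x * P₂ (x, y))
        = x * ∫ y in Set.Ioi (0:ℝ), kf x y * v (x + y) := by
      rw [← integral_const_mul]
    simp only [Qc, Qf]
    rw [e1, e2, e3, e4]
    ring
  calc ∫ x in Set.Ioi (0:ℝ), x * (-(deriv f x) + Qc kc v x - Qf kf v x)
      = ∫ x in Set.Ioi (0:ℝ),
          (-(x * deriv f x)
            + ((1/2) * (∫ y in (0:ℝ)..x, x * P₁ (y, x - y))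
                - ∫ y in Set.Ioi (0:ℝ), x * P₁ (x, y))
            - ((1/2) * (∫ y in (0:ℝ)..x, x * P₂ (y, x - y))
                - ∫ y in Set.Ioi (0:ℝ), x * P₂ (x, y))) :=
        setIntegral_congr_fun measurableSet_Ioi hpt
    _ = -(∫ x in Set.Ioi (0:ℝ), x * deriv f x)
        + ((1/2) * (∫ x in Set.Ioi (0:ℝ), (∫ y in (0:ℝ)..x, x * P₁ (y, x - y)))
            - ∫ x in Set.Ioi (0:ℝ), (∫ y in Set.Ioi (0:ℝ), x * P₁ (x, y)))
        - ((1/2) * (∫ x in Set.Ioi (0:ℝ), (∫ y in (0:ℝ)..x, x * P₂ (y, x - y)))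
            - ∫ x in Set.Ioi (0:ℝ), (∫ y in Set.Ioi (0:ℝ), x * P₂ (x, y))) := by
        have i1 : Integrable
            (fun x => (1/2) * (∫ y in (0:ℝ)..x, x * P₁ (y, x - y))
              - ∫ y in Set.Ioi (0:ℝ), x * P₁ (x, y)) (volume.restrict (Set.Ioi 0)) :=
          (hIntA₁.const_mul _).sub hIntB₁
        have i2 : Integrable
            (fun x => (1/2) * (∫ y in (0:ℝ)..x, x * P₂ (y, x - y))
              - ∫ y in Set.Ioi (0:ℝ), x * P₂ (x, y)) (volume.restrict (Set.Ioi 0)) :=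
          (hIntA₂.const_mul _).sub hIntB₂
        have i0 : Integrable (fun x => -(x * deriv f x)) (volume.restrict (Set.Ioi 0)) :=
          hInt_h.neg
        have i01 : Integrable (fun x => -(x * deriv f x)
            + ((1/2) * (∫ y in (0:ℝ)..x, x * P₁ (y, x - y))
                - ∫ y in Set.Ioi (0:ℝ), x * P₁ (x, y))) (volume.restrict (Set.Ioi 0)) := by
          apply (i0.add i1).congr
          apply Filter.Eventually.of_forall
          intro x
          simp only [Pi.add_apply]
        rw [integral_sub i01 i2, integral_add i0 i1, integral_neg,
          integral_sub (hIntA₁.const_mul _) hIntB₁, integral_sub (hIntA₂.const_mul _) hIntB₂,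
          integral_const_mul, integral_const_mul]
    _ = ∫ x in Set.Ioi (0:ℝ), f x := by
        rw [hparts, hkey₁, hkey₂]
        ring

/-- the ODE for the monomer concentration can be replaced by the mass
conservation formula `V(t) = V₀ + ∫_0^∞ x (u₀(x) − u(x,t)) dx`. -/
theorem monomer_mass_conservation_formula
    (kon koff : ℝ → ℝ) (kc kf : ℝ → ℝ → ℝ) (T₀ : ℝ) (hT₀ : 0 < T₀)
    (V : ℝ → ℝ) (u : ℝ → ℝ → ℝ) (V₀ : ℝ) (u₀ : ℝ → ℝ)
    (hV0 : V 0 = V₀) (hu0 : ∀ x, u x 0 = u₀ x)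
    (hkon : ContDiffOn ℝ 1 kon (Set.Ici 0))
    (hkoff : ContDiffOn ℝ 1 koff (Set.Ici 0))
    (hkc_cont : ContinuousOn (fun p : ℝ × ℝ => kc p.1 p.2) (Set.Ici 0 ×ˢ Set.Ici 0))
    (hkc_symm : ∀ x ∈ Set.Ici (0:ℝ), ∀ y ∈ Set.Ici (0:ℝ), kc x y = kc y x)
    (hkf_cont : ContinuousOn (fun p : ℝ × ℝ => kf p.1 p.2) (Set.Ici 0 ×ˢ Set.Ici 0))
    (hkf_symm : ∀ x ∈ Set.Ici (0:ℝ), ∀ y ∈ Set.Ici (0:ℝ), kf x y = kf y x)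
    (hV : ContDiffOn ℝ 1 V (Set.Icc 0 T₀))
    (hu : ContDiffOn ℝ 1 (fun p : ℝ × ℝ => u p.1 p.2) (Set.Ici 0 ×ˢ Set.Icc 0 T₀))
    (hsupp : ∃ M : ℝ, 0 < M ∧ ∀ x ≥ M, ∀ t ∈ Set.Icc (0:ℝ) T₀, u x t = 0)
    (hODE : ∀ t ∈ Set.Ioo (0:ℝ) T₀,
      HasDerivAt V (-∫ x in Set.Ioi (0:ℝ), Trate kon koff (V t) x * u x t) t)
    (hPDE : ∀ t ∈ Set.Ioo (0:ℝ) T₀, ∀ x > (0:ℝ),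
      HasDerivAt (fun s => u x s)
        (-(deriv (fun y => Trate kon koff (V t) y * u y t) x)
          + Qc kc (fun y => u y t) x - Qf kf (fun y => u y t) x) t) :
    ∀ t ∈ Set.Icc (0:ℝ) T₀,
      V t = V₀ + ∫ x in Set.Ioi (0:ℝ), x * (u₀ x - u x t) := by
  obtain ⟨M, hM, hMsupp⟩ := hsupp
  set s : Set (ℝ × ℝ) := Set.Ici 0 ×ˢ Set.Icc 0 T₀ with hsdef
  set uu : ℝ × ℝ → ℝ := fun p => u p.1 p.2 with huu
  have hsnhds : ∀ x t : ℝ, 0 < x → t ∈ Set.Ioo 0 T₀ → s ∈ 𝓝 ((x, t) : ℝ × ℝ) := by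
    intro x t hx ht
    apply Filter.mem_of_superset ((isOpen_Ioi.prod isOpen_Ioo).mem_nhds (Set.mk_mem_prod hx ht))
    exact Set.prod_mono Set.Ioi_subset_Ici_self Set.Ioo_subset_Icc_self
  have hslice_cd : ∀ t ∈ Set.Icc (0:ℝ) T₀, ContDiffOn ℝ 1 (fun x => u x t) (Set.Ici 0) := by
    intro t ht
    have hmap : Set.MapsTo (fun x : ℝ => ((x, t) : ℝ × ℝ)) (Set.Ici 0) s :=
      fun x hx => ⟨hx, ht⟩
    exact hu.comp (contDiff_id.prodMk contDiff_const).contDiffOn hmap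
  have hslice_t_cont : ∀ x : ℝ, 0 ≤ x → ContinuousOn (fun t => u x t) (Set.Icc 0 T₀) := by
    intro x hx
    have hmap : Set.MapsTo (fun t : ℝ => ((x, t) : ℝ × ℝ)) (Set.Icc 0 T₀) s :=
      fun t ht => ⟨hx, ht⟩
    exact hu.continuousOn.comp (continuous_const.prodMk continuous_id).continuousOn hmap
  have hud : ∀ x t : ℝ, 0 < x → t ∈ Set.Ioo 0 T₀ → DifferentiableAt ℝ uu (x, t) :=
    fun x t hx ht => ((hu.contDiffAt (hsnhds x t hx ht)).differentiableAt one_ne_zero)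
  have hslice : ∀ x t : ℝ, 0 < x → t ∈ Set.Ioo 0 T₀ →
      HasDerivAt (fun τ => u x τ) ((fderiv ℝ uu (x, t)) (0, 1)) t := by
    intro x t hx ht
    have h1 : HasFDerivAt uu (fderiv ℝ uu (x, t)) (x, t) := (hud x t hx ht).hasFDerivAt
    have h2 : HasDerivAt (fun τ : ℝ => ((x, τ) : ℝ × ℝ)) (((0 : ℝ), (1 : ℝ)) : ℝ × ℝ) t := by
      have h3 := (hasDerivAt_const t x).prodMk (hasDerivAt_id t)
      simpa using h3
    exact h1.comp_hasDerivAt t h2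
  have hfdzero : ∀ x t : ℝ, 0 < x → M ≤ x → t ∈ Set.Ioo 0 T₀ →
      (fderiv ℝ uu (x, t)) (0, 1) = 0 := by
    intro x t hx hMx ht
    have h2 : HasDerivAt (fun τ => u x τ) 0 t := by
      have hev : (fun τ => u x τ) =ᶠ[𝓝 t] (fun _ => (0:ℝ)) := by
        filter_upwards [Ioo_mem_nhds ht.1 ht.2] with τ hτ
        exact hMsupp x hMx τ (Set.Ioo_subset_Icc_self hτ)
      exact (hasDerivAt_const t (0:ℝ)).congr_of_eventuallyEq hev
    exact (hslice x t hx ht).unique h2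
  have husd : UniqueDiffOn ℝ s := (uniqueDiffOn_Ici 0).prod (uniqueDiffOn_Icc hT₀)
  have hfd_cont : ContinuousOn (fun p => fderivWithin ℝ uu s p) s :=
    hu.continuousOn_fderivWithin husd le_rfl
  have hKsub : Set.Icc (0:ℝ) M ×ˢ Set.Icc (0:ℝ) T₀ ⊆ s :=
    Set.prod_mono Set.Icc_subset_Ici_self (subset_refl _)
  obtain ⟨C, hC⟩ := (isCompact_Icc.prod isCompact_Icc).exists_bound_of_continuousOn
    (hfd_cont.mono hKsub)
  have hC0 : 0 ≤ C := le_trans (norm_nonneg _)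
    (hC (0, 0) ⟨⟨le_refl 0, hM.le⟩, ⟨le_refl 0, hT₀.le⟩⟩)
  have hfdeq : ∀ x t : ℝ, 0 < x → t ∈ Set.Ioo 0 T₀ →
      fderiv ℝ uu (x, t) = fderivWithin ℝ uu s (x, t) :=
    fun x t hx ht => (fderivWithin_of_mem_nhds (hsnhds x t hx ht)).symm
  set bnd : ℝ → ℝ := Set.indicator (Set.Icc (0:ℝ) M)
    (fun _ => M * (C * ‖(((0:ℝ), (1:ℝ)) : ℝ × ℝ)‖)) with hbnd
  have hbnd_int : Integrable bnd (volume.restrict (Set.Ioi 0)) := by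
    rw [hbnd, integrable_indicator_iff measurableSet_Icc]
    exact integrableOn_const (lt_of_le_of_lt (Measure.restrict_apply_le _ _) measure_Icc_lt_top).ne
  -- integrability of slices
  have hInt_ut : ∀ τ ∈ Set.Icc (0:ℝ) T₀,
      Integrable (fun x : ℝ => x * u x τ) (volume.restrict (Set.Ioi 0)) := by
    intro τ hτ
    apply aux_integrableOn_Ioi (M := M)
    · exact continuous_id.continuousOn.mul (hslice_cd τ hτ).continuousOn
    · intro x hx; rw [hMsupp x hx τ hτ, mul_zero]
  -- the derivative of the mass integral
  have hφderiv : ∀ t ∈ Set.Ioo (0:ℝ) T₀,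
      HasDerivAt (fun τ => ∫ x in Set.Ioi (0:ℝ), x * u x τ)
        (∫ x in Set.Ioi (0:ℝ), Trate kon koff (V t) x * u x t) t := by
    intro t ht
    set ε : ℝ := min t (T₀ - t) with hε
    have hε0 : 0 < ε := lt_min ht.1 (by linarith [ht.2])
    have hball : Metric.ball t ε ⊆ Set.Ioo 0 T₀ := by
      intro τ hτ
      rw [Metric.mem_ball, Real.dist_eq, abs_lt] at hτ
      have h1 : ε ≤ t := min_le_left _ _
      have h2 : ε ≤ T₀ - t := min_le_right _ _
      exact ⟨by linarith [hτ.1], by linarith [hτ.2]⟩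
    have hmeas : ∀ᶠ τ in 𝓝 t, AEStronglyMeasurable (fun x : ℝ => x * u x τ)
        (volume.restrict (Set.Ioi 0)) := by
      filter_upwards [Ioo_mem_nhds ht.1 ht.2] with τ hτ
      apply ContinuousOn.aestronglyMeasurable _ measurableSet_Ioi
      exact (continuous_id.continuousOn.mul
        (hslice_cd τ (Set.Ioo_subset_Icc_self hτ)).continuousOn).mono Set.Ioi_subset_Ici_self
    have hint : Integrable (fun x : ℝ => x * u x t) (volume.restrict (Set.Ioi 0)) :=
      hInt_ut t (Set.Ioo_subset_Icc_self ht)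
    have hmeas' : AEStronglyMeasurable (fun x : ℝ => x * (fderiv ℝ uu (x, t)) (0, 1))
        (volume.restrict (Set.Ioi 0)) := by
      apply Measurable.aestronglyMeasurable
      have hm1 : Measurable (fun p : ℝ × ℝ => (fderiv ℝ uu p) (0, 1)) := by
        apply measurable_fderiv_apply_const
      exact measurable_id.mul (hm1.comp (measurable_id.prodMk measurable_const))
    have hbound : ∀ᵐ x ∂(volume.restrict (Set.Ioi 0)), ∀ τ ∈ Metric.ball t ε,
        ‖x * (fderiv ℝ uu (x, τ)) (0, 1)‖ ≤ bnd x := by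
      filter_upwards [ae_restrict_mem measurableSet_Ioi] with x hx
      intro τ hτ
      have hτ' : τ ∈ Set.Ioo 0 T₀ := hball hτ
      by_cases hxM : x ≤ M
      · rw [hbnd, Set.indicator_of_mem (Set.mem_Icc.2 ⟨le_of_lt hx, hxM⟩)]
        rw [hfdeq x τ hx hτ', norm_mul]
        have hb1 : ‖(fderivWithin ℝ uu s (x, τ)) (0, 1)‖
            ≤ C * ‖(((0:ℝ), (1:ℝ)) : ℝ × ℝ)‖ := by
          apply le_trans (ContinuousLinearMap.le_opNorm _ _)
          apply mul_le_mul_of_nonneg_right _ (norm_nonneg _)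
          exact hC (x, τ) ⟨⟨le_of_lt hx, hxM⟩, Set.Ioo_subset_Icc_self hτ'⟩
        have hb2 : ‖x‖ ≤ M := by
          rw [Real.norm_eq_abs, abs_of_pos hx]; exact hxM
        exact mul_le_mul hb2 hb1 (norm_nonneg _) hM.le
      · rw [hfdzero x τ hx (le_of_lt (not_le.1 hxM)) hτ', mul_zero, norm_zero]
        apply Set.indicator_nonneg
        intro y _
        exact mul_nonneg hM.le (mul_nonneg hC0 (norm_nonneg _))
    have hdiff : ∀ᵐ x ∂(volume.restrict (Set.Ioi 0)), ∀ τ ∈ Metric.ball t ε,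
        HasDerivAt (fun τ => x * u x τ) (x * (fderiv ℝ uu (x, τ)) (0, 1)) τ := by
      filter_upwards [ae_restrict_mem measurableSet_Ioi] with x hx
      intro τ hτ
      exact (hslice x τ hx (hball hτ)).const_mul x
    obtain ⟨-, hmain⟩ := hasDerivAt_integral_of_dominated_loc_of_deriv_le
      (F := fun τ (x : ℝ) => x * u x τ)
      (F' := fun τ (x : ℝ) => x * (fderiv ℝ uu (x, τ)) (0, 1))
      (bound := bnd) (Metric.ball_mem_nhds t hε0) hmeas hint hmeas' hbound hbnd_int hdiff
    have hcongr : ∫ x in Set.Ioi (0:ℝ), x * (fderiv ℝ uu (x, t)) (0, 1)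
        = ∫ x in Set.Ioi (0:ℝ),
            x * (-(deriv (fun y => Trate kon koff (V t) y * u y t) x)
              + Qc kc (fun y => u y t) x - Qf kf (fun y => u y t) x) := by
      apply setIntegral_congr_fun measurableSet_Ioi
      intro x hx
      have h8 := (hslice x t hx ht).unique (hPDE t ht x hx)
      exact congrArg (fun r => x * r) h8
    have hweak := aux_weak kon koff kc kf (V t) M hM hkon hkoff hkc_cont hkc_symm hkf_cont
      hkf_symm (fun y => u y t) (hslice_cd t (Set.Ioo_subset_Icc_self ht))
      (fun x hx => hMsupp x hx t (Set.Ioo_subset_Icc_self ht))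
    rw [hcongr, hweak] at hmain
    exact hmain
  -- continuity of the mass integral
  obtain ⟨C₀, hC₀⟩ := (isCompact_Icc.prod isCompact_Icc).exists_bound_of_continuousOn
    (hu.continuousOn.mono hKsub)
  have hC₀0 : 0 ≤ C₀ := le_trans (norm_nonneg _)
    (hC₀ (0, 0) ⟨⟨le_refl 0, hM.le⟩, ⟨le_refl 0, hT₀.le⟩⟩)
  set bnd₀ : ℝ → ℝ := Set.indicator (Set.Icc (0:ℝ) M) (fun _ => M * C₀) with hbnd₀
  have hbnd₀_int : Integrable bnd₀ (volume.restrict (Set.Ioi 0)) := by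
    rw [hbnd₀, integrable_indicator_iff measurableSet_Icc]
    exact integrableOn_const (lt_of_le_of_lt (Measure.restrict_apply_le _ _) measure_Icc_lt_top).ne
  have hφcont : ContinuousOn (fun t => ∫ x in Set.Ioi (0:ℝ), x * u x t)
      (Set.Icc 0 T₀) := by
    apply continuousOn_of_dominated (bound := bnd₀)
    · intro t ht
      apply ContinuousOn.aestronglyMeasurable _ measurableSet_Ioi
      exact (continuous_id.continuousOn.mul
        (hslice_cd t ht).continuousOn).mono Set.Ioi_subset_Ici_self
    · intro t ht
      filter_upwards [ae_restrict_mem measurableSet_Ioi] with x hx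
      by_cases hxM : x ≤ M
      · rw [hbnd₀, Set.indicator_of_mem (Set.mem_Icc.2 ⟨le_of_lt hx, hxM⟩), norm_mul]
        apply mul_le_mul _ _ (norm_nonneg _) hM.le
        · rw [Real.norm_eq_abs, abs_of_pos hx]; exact hxM
        · exact hC₀ (x, t) ⟨⟨le_of_lt hx, hxM⟩, ht⟩
      · rw [hMsupp x (le_of_lt (not_le.1 hxM)) t ht, mul_zero, norm_zero]
        apply Set.indicator_nonneg
        intro y _
        exact mul_nonneg hM.le hC₀0
    · exact hbnd₀_int
    · filter_upwards [ae_restrict_mem measurableSet_Ioi] with x hx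
      exact continuous_const.continuousOn.mul (hslice_t_cont x (le_of_lt hx))
  -- the conserved quantity
  set G : ℝ → ℝ := fun t => V t + ∫ x in Set.Ioi (0:ℝ), x * u x t with hG
  have hG' : ∀ t ∈ Set.Ioo (0:ℝ) T₀, HasDerivAt G (0:ℝ) t := by
    intro t ht
    have h1 := (hODE t ht).add (hφderiv t ht)
    rw [hG]
    simpa [Pi.add_def] using h1
  have hGcont : ContinuousOn G (Set.Icc 0 T₀) := hV.continuousOn.add hφcont
  have hGc2 : ∀ a b : ℝ, 0 < a → a ≤ b → b ≤ T₀ → G b = G a := by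
    intro a b ha hab hbT
    exact constant_of_has_deriv_right_zero
      (hGcont.mono (Set.Icc_subset_Icc (by linarith) hbT))
      (fun x hx => (hG' x ⟨lt_of_lt_of_le ha hx.1, lt_of_lt_of_le hx.2 hbT⟩).hasDerivWithinAt)
      b (Set.right_mem_Icc.2 hab)
  have hG0 : ∀ t ∈ Set.Icc (0:ℝ) T₀, G t = G 0 := by
    intro t ht
    rcases eq_or_lt_of_le ht.1 with h | h
    · rw [← h]
    · have hconst : ∀ τ ∈ Set.Ioc (0:ℝ) t, G τ = G t :=
        fun τ hτ => (hGc2 τ t hτ.1 hτ.2 ht.2).symm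
      have hsub : Set.Ioc (0:ℝ) t ⊆ Set.Icc (0:ℝ) T₀ :=
        fun τ hτ => ⟨le_of_lt hτ.1, le_trans hτ.2 ht.2⟩
      have hne : (𝓝[Set.Ioc (0:ℝ) t] (0:ℝ)).NeBot := by
        apply mem_closure_iff_nhdsWithin_neBot.1
        rw [closure_Ioc (ne_of_lt h)]
        exact Set.left_mem_Icc.2 (le_of_lt h)
      have h1 : Filter.Tendsto G (𝓝[Set.Ioc (0:ℝ) t] 0) (𝓝 (G 0)) :=
        (hGcont 0 (Set.left_mem_Icc.2 hT₀.le)).mono_left (nhdsWithin_mono 0 hsub)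
      have h2 : Filter.Tendsto G (𝓝[Set.Ioc (0:ℝ) t] 0) (𝓝 (G t)) := by
        apply Filter.Tendsto.congr' _ tendsto_const_nhds
        filter_upwards [self_mem_nhdsWithin] with τ hτ
        exact (hconst τ hτ).symm
      exact (tendsto_nhds_unique h1 h2).symm
  -- conclusion
  intro t ht
  have hInt_u0 : Integrable (fun x : ℝ => x * u₀ x) (volume.restrict (Set.Ioi 0)) := by
    apply (hInt_ut 0 ⟨le_refl 0, hT₀.le⟩).congr
    apply Filter.Eventually.of_forall
    intro x
    show x * u x 0 = x * u₀ x
    rw [hu0 x]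
  have hsplit : ∫ x in Set.Ioi (0:ℝ), x * (u₀ x - u x t)
      = (∫ x in Set.Ioi (0:ℝ), x * u₀ x) - ∫ x in Set.Ioi (0:ℝ), x * u x t := by
    rw [← integral_sub hInt_u0 (hInt_ut t ht)]
    apply integral_congr_ae
    apply Filter.Eventually.of_forall
    intro x
    simp only
    ring
  have hphi0 : ∫ x in Set.Ioi (0:ℝ), x * u x 0 = ∫ x in Set.Ioi (0:ℝ), x * u₀ x := by
    apply integral_congr_ae
    apply Filter.Eventually.of_forall
    intro x
    show x * u x 0 = x * u₀ x
    rw [hu0 x]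
  have hGt : V t + (∫ x in Set.Ioi (0:ℝ), x * u x t)
      = V 0 + ∫ x in Set.Ioi (0:ℝ), x * u x 0 := hG0 t ht
  rw [hsplit]
  linarith [hGt, hphi0, hV0]
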